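/- For integers m ≥ 2 and n ≥ 1, the two-color Ramsey number of a tree T_m on m vertices versus the complete graph K_n equals (m−1)(n−1)+1. -/

import Mathlib

open SimpleGraph

/-- `H` is contained in `G` as a subgraph (there is an injective adjacency-preserving map). -/
def ContainsCopy {α β : Type*} (H : SimpleGraph α) (G : SimpleGraph β) : Prop :=
  ∃ f : α ↪ β, ∀ u v, H.Adj u v → G.Adj (f u) (f v)

/-- The `k`-edge-coloring `c` of the complete graph on `Fin N` contains a monochromatic copy of `H`. -/
def HasMonoCopy {α : Type*} (H : SimpleGraph α) {N k : ℕ}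
    (c : Sym2 (Fin N) → Fin k) : Prop :=
  ∃ i : Fin k, ∃ f : α ↪ Fin N, ∀ u v, H.Adj u v → c s(f u, f v) = i

/-- The multicolor Ramsey number `r_k(H)`: the least `N` such that every `k`-coloring of the
edges of `K_N` contains a monochromatic copy of `H`. -/
noncomputable def multiRamsey {α : Type*} (H : SimpleGraph α) (k : ℕ) : ℕ :=
  sInf {N | ∀ c : Sym2 (Fin N) → Fin k, HasMonoCopy H c}

/-- The graph on `Fin N` formed by the edges of color `i`. -/
def colorGraph {N k : ℕ} (c : Sym2 (Fin N) → Fin k) (i : Fin k) : SimpleGraph (Fin N) where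
  Adj u v := u ≠ v ∧ c s(u, v) = i
  symm := by
    refine ⟨?_⟩
    intro u v h
    exact ⟨h.1.symm, by rw [Sym2.eq_swap]; exact h.2⟩
  loopless := ⟨fun u h => h.1 rfl⟩

/-- The independence number of a graph. -/
noncomputable def indepNum {V : Type*} (G : SimpleGraph V) : ℕ :=
  sSup {n | ∃ s : Finset V, s.card = n ∧ ∀ u ∈ s, ∀ v ∈ s, ¬ G.Adj u v}

/-- The two-color (asymmetric) Ramsey number `r(G, H)`. -/
noncomputable def ramsey2 {α β : Type*} (G : SimpleGraph α) (H : SimpleGraph β) : ℕ :=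
  sInf {N | ∀ c : Sym2 (Fin N) → Bool,
    (∃ f : α ↪ Fin N, ∀ u v, G.Adj u v → c s(f u, f v) = true) ∨
    (∃ f : β ↪ Fin N, ∀ u v, H.Adj u v → c s(f u, f v) = false)}


lemma cross_edge {V : Type*} {G : SimpleGraph V} {t : Set V} {x y : V}
    (p : G.Walk x y) (hx : x ∈ t) (hy : y ∉ t) :
    ∃ a b, a ∈ t ∧ b ∉ t ∧ G.Adj a b := by
  induction p with
  | nil => exact absurd hx hy
  | @cons x z y h q ih =>
    by_cases hz : z ∈ t
    · exact ih hz hy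
    · exact ⟨x, z, hx, hz, h⟩

lemma one_nbr {m : ℕ} {T : SimpleGraph (Fin m)} (hT : T.IsTree)
    {t : Set (Fin m)} {a b c : Fin m} (hb : b ∉ t)
    (w : T.Walk a c) (hw : ∀ x ∈ w.support, x ∈ t)
    (hba : T.Adj b a) (hbc : T.Adj b c) : a = c := by
  by_contra hac
  set P := w.toPath with hP
  have hsupp : b ∉ (P : T.Walk a c).support := fun h =>
    hb (hw _ (Walk.support_toPath_subset w h))
  have hP2 : (Walk.cons hba (P : T.Walk a c)).IsPath := P.2.cons hsupp
  have hP1 : (Walk.cons hbc (Walk.nil : T.Walk c c)).IsPath :=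
    (Walk.IsPath.nil).cons (by simp [hbc.ne])
  have := hT.IsAcyclic.path_unique ⟨_, hP2⟩ ⟨_, hP1⟩
  have hlen : (Walk.cons hba (P : T.Walk a c)).length
      = (Walk.cons hbc (Walk.nil : T.Walk c c)).length := by
    rw [Subtype.mk.injEq] at this; rw [this]
  simp [Walk.length_cons] at hlen
  exact hac hlen.eq

open scoped Classical in
lemma embed_tree {m N : ℕ} (hm : 2 ≤ m) {T : SimpleGraph (Fin m)} (hT : T.IsTree)
    {G : SimpleGraph (Fin N)} {s : Finset (Fin N)} (hs : s.Nonempty)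
    (hdeg : ∀ v ∈ s, m - 1 ≤ (s.filter (G.Adj v)).card) :
    ∃ f : Fin m ↪ Fin N, (∀ u, f u ∈ s) ∧ ∀ u v, T.Adj u v → G.Adj (f u) (f v) := by
  obtain ⟨v0, hv0⟩ := hs
  have hm0 : 0 < m := by omega
  set r : Fin m := ⟨0, hm0⟩ with hr
  have key : ∀ k, 1 ≤ k → k ≤ m → ∃ (t : Finset (Fin m)) (f : Fin m → Fin N),
      t.card = k ∧ (∀ x ∈ t, f x ∈ s) ∧ (Set.InjOn f t) ∧
      (∀ x ∈ t, ∀ y ∈ t, T.Adj x y → G.Adj (f x) (f y)) ∧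
      (∀ x ∈ t, ∃ w : T.Walk r x, ∀ z ∈ w.support, z ∈ (t : Set (Fin m))) := by
    intro k
    induction k with
    | zero => omega
    | succ k ih =>
      intro _ hk1
      rcases Nat.eq_zero_or_pos k with hk0 | hkpos
      · -- base case: k + 1 = 1
        subst hk0
        refine ⟨{r}, fun _ => v0, by simp, by simp [hv0], by simp, ?_, ?_⟩
        · intro x hx y hy hadj
          simp only [Finset.mem_singleton] at hx hy
          subst hx; subst hy; exact absurd hadj (T.irrefl)
        · intro x hx
          simp only [Finset.mem_singleton] at hx
          subst hx
          exact ⟨Walk.nil, by simp⟩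
      · obtain ⟨t, f, hcard, hfs, hinj, hedge, hwalk⟩ := ih hkpos (by omega)
        -- t is not everything
        have htne : (t : Set (Fin m)) ≠ Set.univ := by
          intro h
          have : t = Finset.univ := by
            apply Finset.eq_univ_of_forall
            intro x; have := Set.eq_univ_iff_forall.mp h x; exact_mod_cast this
          rw [this] at hcard; simp [Finset.card_univ] at hcard; omega
        obtain ⟨b, hb⟩ : ∃ b, b ∉ (t : Set (Fin m)) := by
          by_contra h; push_neg at h
          exact htne (Set.eq_univ_iff_forall.mpr h)
        have htr : r ∈ t := by
          have : (1:ℕ) ≤ t.card := by omega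
          obtain ⟨x0, hx0⟩ := Finset.card_pos.mp (show 0 < t.card by omega)
          obtain ⟨w, hw⟩ := hwalk x0 hx0
          exact_mod_cast hw r (Walk.start_mem_support w)
        -- find a crossing edge
        obtain ⟨a, b', ha, hb', hab⟩ :=
          cross_edge (hT.isConnected.preconnected r b).some htr hb
        have ha' : a ∈ t := ha
        -- pick a fresh image vertex
        have hfa : f a ∈ s := hfs a ha'
        have hA : 1 ≤ ((s.filter (G.Adj (f a))) \ t.image f).card := by
          have h1 : m - 1 ≤ (s.filter (G.Adj (f a))).card := hdeg _ hfa
          have h2 : (t.image f).card = k := by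
            rw [Finset.card_image_of_injOn hinj, hcard]
          have h3 : f a ∉ s.filter (G.Adj (f a)) := by
            simp [G.irrefl]
          have h4 : ((t.image f) ∩ (s.filter (G.Adj (f a)))).card ≤ k - 1 + 1 - 1 := by
            have : f a ∈ t.image f := Finset.mem_image_of_mem f ha'
            have hss : (t.image f) ∩ (s.filter (G.Adj (f a))) ⊆ (t.image f).erase (f a) := by
              intro x hx
              rcases Finset.mem_inter.mp hx with ⟨hx1, hx2⟩
              refine Finset.mem_erase.mpr ⟨?_, hx1⟩
              rintro rfl; exact h3 hx2
            calc ((t.image f) ∩ (s.filter (G.Adj (f a)))).card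
                ≤ ((t.image f).erase (f a)).card := Finset.card_le_card hss
              _ = k - 1 := by rw [Finset.card_erase_of_mem this, h2]
              _ ≤ k - 1 + 1 - 1 := by omega
          have := Finset.card_sdiff_add_card_inter (s.filter (G.Adj (f a))) (t.image f)
          have hik : ((s.filter (G.Adj (f a))) ∩ (t.image f)).card ≤ k - 1 := by
            rw [Finset.inter_comm] at h4; omega
          omega
        obtain ⟨w, hwmem⟩ := Finset.card_pos.mp (show 0 < ((s.filter (G.Adj (f a))) \ t.image f).card by omega)
        rw [Finset.mem_sdiff, Finset.mem_filter] at hwmem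
        obtain ⟨⟨hws, hwadj⟩, hwim⟩ := hwmem
        -- walks within t between members of t
        have hwalk2 : ∀ x ∈ t, ∀ y ∈ t, ∃ w : T.Walk x y,
            ∀ z ∈ w.support, z ∈ (t : Set (Fin m)) := by
          intro x hx y hy
          obtain ⟨w1, hw1⟩ := hwalk x hx
          obtain ⟨w2, hw2⟩ := hwalk y hy
          refine ⟨w1.reverse.append w2, ?_⟩
          intro z hz
          rw [Walk.mem_support_append_iff] at hz
          rcases hz with hz | hz
          · exact hw1 z (by rwa [Walk.support_reverse, List.mem_reverse] at hz)
          · exact hw2 z hz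
        -- the update
        set f' := Function.update f b' w with hf'
        have hfb' : f' b' = w := Function.update_self _ _ _
        have hfold : ∀ x ∈ t, f' x = f x := by
          intro x hx
          apply Function.update_of_ne
          rintro rfl; exact hb' hx
        refine ⟨insert b' t, f', ?_, ?_, ?_, ?_, ?_⟩
        · rw [Finset.card_insert_of_notMem (fun h => hb' h), hcard]
        · intro x hx
          rcases Finset.mem_insert.mp hx with rfl | hx
          · rw [hfb']; exact hws
          · rw [hfold x hx]; exact hfs x hx
        · intro x hx y hy hxy
          simp only [Finset.coe_insert, Set.mem_insert_iff] at hx hy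
          rcases hx with rfl | hx <;> rcases hy with rfl | hy
          · rfl
          · rw [hfb', hfold y hy] at hxy
            exact absurd (hxy.symm ▸ Finset.mem_image_of_mem f hy) hwim
          · rw [hfb', hfold x hx] at hxy
            exact absurd (hxy ▸ Finset.mem_image_of_mem f hx) hwim
          · rw [hfold x hx, hfold y hy] at hxy
            exact hinj hx hy hxy
        · intro x hx y hy hadj
          rcases Finset.mem_insert.mp hx with hxb | hx2
          · rcases Finset.mem_insert.mp hy with hyb | hy2
            · rw [hxb, hyb] at hadj; exact absurd hadj (T.irrefl)
            · obtain ⟨wa, hwa⟩ := hwalk2 a ha' y hy2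
              rw [hxb] at hadj
              have hay : a = y := one_nbr hT hb' wa hwa hab.symm hadj
              rw [hxb, hfb', ← hay, hfold a ha']
              rw [← hay] at hadj
              exact hwadj.symm
          · rcases Finset.mem_insert.mp hy with hyb | hy2
            · obtain ⟨wa, hwa⟩ := hwalk2 a ha' x hx2
              rw [hyb] at hadj
              have hax : a = x := one_nbr hT hb' wa hwa hab.symm hadj.symm
              rw [hyb, hfb', ← hax, hfold a ha']
              exact hwadj
            · rw [hfold x hx2, hfold y hy2]
              exact hedge x hx2 y hy2 hadj
        · intro x hx
          rcases Finset.mem_insert.mp hx with rfl | hx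
          · obtain ⟨wa, hwa⟩ := hwalk a ha'
            refine ⟨wa.concat hab, ?_⟩
            intro z hz
            simp only [Finset.coe_insert, Set.mem_insert_iff]
            rw [Walk.support_concat, List.mem_append] at hz
            rcases hz with hz | hz
            · exact Or.inr (hwa z hz)
            · simp at hz; subst hz; exact Or.inl rfl
          · obtain ⟨wa, hwa⟩ := hwalk x hx
            refine ⟨wa, fun z hz => ?_⟩
            simp only [Finset.coe_insert, Set.mem_insert_iff]
            exact Or.inr (hwa z hz)
  obtain ⟨t, f, hcard, hfs, hinj, hedge, _⟩ := key m (by omega) le_rfl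
  have htuniv : t = Finset.univ := Finset.eq_univ_of_card t (by simp [hcard])
  subst htuniv
  refine ⟨⟨f, fun x y h => hinj (by simp) (by simp) h⟩, fun u => hfs u (by simp), ?_⟩
  exact fun u v h => hedge u (by simp) v (by simp) h

open scoped Classical in
lemma indep_of_no_tree {m N : ℕ} (hm : 2 ≤ m) {T : SimpleGraph (Fin m)} (hT : T.IsTree)
    {G : SimpleGraph (Fin N)}
    (hno : ¬ ∃ f : Fin m ↪ Fin N, ∀ u v, T.Adj u v → G.Adj (f u) (f v)) :
    ∀ s : Finset (Fin N), ∃ t ⊆ s, (∀ u ∈ t, ∀ v ∈ t, ¬ G.Adj u v) ∧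
      s.card ≤ (m - 1) * t.card := by
  have main : ∀ k, ∀ s : Finset (Fin N), s.card = k → ∃ t ⊆ s,
      (∀ u ∈ t, ∀ v ∈ t, ¬ G.Adj u v) ∧ s.card ≤ (m - 1) * t.card := by
    intro k
    induction k using Nat.strong_induction_on with
    | _ k ih =>
      intro s hsk
      rcases Finset.eq_empty_or_nonempty s with rfl | hsne
      · exact ⟨∅, Finset.Subset.refl _, by simp, by simp⟩
      · -- there is a vertex of low degree in s
        obtain ⟨v, hv, hvdeg⟩ : ∃ v ∈ s, (s.filter (G.Adj v)).card < m - 1 := by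
          by_contra h
          push_neg at h
          obtain ⟨f, _, hf⟩ := embed_tree hm hT hsne h
          exact hno ⟨f, hf⟩
        set D := insert v (s.filter (G.Adj v)) with hD
        have hDcard : D.card ≤ m - 1 := by
          calc D.card ≤ (s.filter (G.Adj v)).card + 1 := Finset.card_insert_le _ _
            _ ≤ m - 1 := by omega
        set s' := s \ D with hs'
        have hvD : v ∈ D := Finset.mem_insert_self _ _
        have hvs' : v ∉ s' := fun h => (Finset.mem_sdiff.mp h).2 hvD
        have hs'lt : s'.card < k := by
          rw [← hsk]
          exact Finset.card_lt_card (Finset.ssubset_iff_of_subset (Finset.sdiff_subset)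
            |>.mpr ⟨v, hv, hvs'⟩)
        obtain ⟨t', ht's', ht'ind, ht'card⟩ := ih s'.card hs'lt s' rfl
        have hvt' : v ∉ t' := fun h => hvs' (ht's' h)
        refine ⟨insert v t', ?_, ?_, ?_⟩
        · intro x hx
          rcases Finset.mem_insert.mp hx with rfl | hx
          · exact hv
          · exact (Finset.mem_sdiff.mp (ht's' hx)).1
        · intro x hx y hy
          have hnadj : ∀ u ∈ t', ¬ G.Adj v u := by
            intro u hu hadj
            have hus' := ht's' hu
            have : u ∈ D := Finset.mem_insert.mpr (Or.inr (Finset.mem_filter.mpr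
              ⟨(Finset.mem_sdiff.mp hus').1, hadj⟩))
            exact (Finset.mem_sdiff.mp hus').2 this
          rcases Finset.mem_insert.mp hx with rfl | hx2
          · rcases Finset.mem_insert.mp hy with rfl | hy2
            · exact G.irrefl
            · exact hnadj y hy2
          · rcases Finset.mem_insert.mp hy with rfl | hy2
            · exact fun h => hnadj x hx2 h.symm
            · exact ht'ind x hx2 y hy2
        · have h1 : s.card ≤ s'.card + D.card := by
            have := Finset.card_sdiff_add_card s D
            rw [← hs'] at this
            have h2 : s.card ≤ (s ∪ D).card := Finset.card_le_card Finset.subset_union_left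
            omega
          rw [Finset.card_insert_of_notMem hvt', Nat.mul_add, Nat.mul_one]
          omega
  exact fun s => main s.card s rfl


lemma walk_const {V : Type*} {G : SimpleGraph V} {g : V → ℕ}
    (h : ∀ u v, G.Adj u v → g u = g v) {x y : V} (p : G.Walk x y) : g x = g y := by
  induction p with
  | nil => rfl
  | cons hadj q ih => exact (h _ _ hadj).trans ih

open scoped Classical in
lemma lower_bound (m n N : ℕ) (hm : 2 ≤ m) (hn : 1 ≤ n)
    (T : SimpleGraph (Fin m)) (hT : T.IsTree) (hN : N ≤ (m - 1) * (n - 1)) :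
    ¬ (∀ c : Sym2 (Fin N) → Bool,
      (∃ f : Fin m ↪ Fin N, ∀ u v, T.Adj u v → c s(f u, f v) = true) ∨
      (∃ f : Fin n ↪ Fin N, ∀ u v, (completeGraph (Fin n)).Adj u v → c s(f u, f v) = false)) := by
  intro h
  set q : Fin N → ℕ := fun u => u.val / (m - 1) with hq
  set c : Sym2 (Fin N) → Bool :=
    Sym2.lift ⟨fun u v => decide (q u = q v), fun u v => by simp [eq_comm]⟩ with hc
  have hcuv : ∀ u v : Fin N, c s(u, v) = decide (q u = q v) := fun u v => by
    simp [hc]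
  rcases h c with ⟨f, hf⟩ | ⟨g, hg⟩
  · -- red tree copy: all in one block of size m-1
    have hconst : ∀ u v : Fin m, q (f u) = q (f v) := by
      intro u v
      have := hT.isConnected.preconnected u v
      exact walk_const (g := fun x => q (f x)) (fun a b hab => by
        have := hf a b hab
        rw [hcuv] at this
        exact of_decide_eq_true this) this.some
    have hmlt : 0 < m - 1 := by omega
    set φ : Fin m → Fin (m - 1) := fun x => ⟨(f x).val % (m - 1), Nat.mod_lt _ hmlt⟩ with hφ
    have hφinj : Function.Injective φ := by
      intro x y hxy
      have h1 : (f x).val % (m - 1) = (f y).val % (m - 1) := congrArg Fin.val hxy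
      have h2 : (f x).val / (m - 1) = (f y).val / (m - 1) := hconst x y
      have : (f x).val = (f y).val := by
        rw [← Nat.div_add_mod (f x).val (m - 1), ← Nat.div_add_mod (f y).val (m - 1), h1, h2]
      exact f.injective (Fin.val_injective this)
    have := Fintype.card_le_of_injective φ hφinj
    simp [Fintype.card_fin] at this
    omega
  · -- blue clique: all in different blocks
    have hqlt : ∀ x : Fin n, q (g x) < n - 1 := by
      intro x
      have : (g x).val < (m - 1) * (n - 1) := lt_of_lt_of_le (g x).isLt hN
      exact Nat.div_lt_of_lt_mul this
    set ψ : Fin n → Fin (n - 1) := fun x => ⟨q (g x), hqlt x⟩ with hψ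
    have hψinj : Function.Injective ψ := by
      intro x y hxy
      by_contra hne
      have hadj : (completeGraph (Fin n)).Adj x y := hne
      have := hg x y hadj
      rw [hcuv] at this
      exact (of_decide_eq_false this) (congrArg Fin.val hxy)
    have := Fintype.card_le_of_injective ψ hψinj
    simp [Fintype.card_fin] at this
    omega

lemma upper_bound (m n N : ℕ) (hm : 2 ≤ m) (hn : 1 ≤ n)
    (T : SimpleGraph (Fin m)) (hT : T.IsTree) (hNdef : N = (m - 1) * (n - 1) + 1) :
    ∀ c : Sym2 (Fin N) → Bool,
      (∃ f : Fin m ↪ Fin N, ∀ u v, T.Adj u v → c s(f u, f v) = true) ∨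
      (∃ f : Fin n ↪ Fin N, ∀ u v,
        (completeGraph (Fin n)).Adj u v → c s(f u, f v) = false) := by
  intro c
  set G : SimpleGraph (Fin N) :=
    SimpleGraph.fromRel (fun u v => c s(u, v) = true) with hG
  have hGadj : ∀ u v : Fin N, G.Adj u v ↔ u ≠ v ∧ c s(u, v) = true := by
    intro u v
    rw [hG, fromRel_adj]
    constructor
    · rintro ⟨hne, h | h⟩
      · exact ⟨hne, h⟩
      · exact ⟨hne, by rwa [Sym2.eq_swap]⟩
    · rintro ⟨hne, h⟩
      exact ⟨hne, Or.inl h⟩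
  by_cases hcopy : ∃ f : Fin m ↪ Fin N, ∀ u v, T.Adj u v → G.Adj (f u) (f v)
  · obtain ⟨f, hf⟩ := hcopy
    exact Or.inl ⟨f, fun u v huv => ((hGadj _ _).mp (hf u v huv)).2⟩
  · obtain ⟨t, _, htind, htcard⟩ := indep_of_no_tree hm hT hcopy (Finset.univ)
    have hNle : N ≤ (m - 1) * t.card := by
      rwa [Finset.card_univ, Fintype.card_fin] at htcard
    have hnle : n ≤ t.card := by
      have h1 : (m - 1) * (n - 1) < (m - 1) * t.card := by omega
      have := Nat.lt_of_mul_lt_mul_left h1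
      omega
    obtain ⟨u, hut, hucard⟩ := Finset.exists_subset_card_eq hnle
    set g : Fin n → Fin N := fun i => (u.orderIsoOfFin hucard i : Fin N) with hg
    have hginj : Function.Injective g := by
      intro x y hxy
      exact (u.orderIsoOfFin hucard).injective (Subtype.ext hxy)
    refine Or.inr ⟨⟨g, hginj⟩, ?_⟩
    intro x y hxy
    have hne : x ≠ y := hxy
    have hgmem : ∀ i, g i ∈ t := fun i => hut (u.orderIsoOfFin hucard i).2
    have hnadj : ¬ G.Adj (g x) (g y) := htind _ (hgmem x) _ (hgmem y)
    rw [hGadj] at hnadj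
    push_neg at hnadj
    have := hnadj (fun h => hne (hginj h))
    simp only [Function.Embedding.coeFn_mk]
    exact Bool.not_eq_true _ ▸ (by simpa using this)

theorem stmt1 (m n : ℕ) (hm : 2 ≤ m) (hn : 1 ≤ n)
    (T : SimpleGraph (Fin m)) (hT : T.IsTree) :
    ramsey2 T (completeGraph (Fin n)) = (m - 1) * (n - 1) + 1 := by
  have hmem : ((m - 1) * (n - 1) + 1) ∈ {N | ∀ c : Sym2 (Fin N) → Bool,
      (∃ f : Fin m ↪ Fin N, ∀ u v, T.Adj u v → c s(f u, f v) = true) ∨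
      (∃ f : Fin n ↪ Fin N, ∀ u v, (completeGraph (Fin n)).Adj u v → c s(f u, f v) = false)} :=
    upper_bound m n _ hm hn T hT rfl
  apply le_antisymm
  · exact Nat.sInf_le hmem
  · by_contra hlt
    push_neg at hlt
    have hle : ramsey2 T (completeGraph (Fin n)) ≤ (m - 1) * (n - 1) := by
      omega
    have hmem2 := Nat.sInf_mem (Set.nonempty_of_mem hmem)
    exact lower_bound m n _ hm hn T hT hle hmem2
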